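/- Soundness of the three-repetition check: suppose s, s' ∈ F_2^n with g(s') ≠ g(s) (hence s' ≠ s), and suppose the recursive subcall returns s·x for a uniformly random x with probability at least 1 − p, and otherwise returns an arbitrary (adversarial) value. Then the probability that all three independent checks 'subcall value = s'·x' pass is at most (1/2)(1+p) per check, hence at most (1/8)(1+p)³ overall. -/

import Mathlib

open Finset

/-- Soundness of the three-repetition check of the RFS verifier, on a finite
probability space `Ω` with weights `w`.  `x j` is the uniformly random query of
check `j`, and `a j` is the value returned by the recursive subcall, which is
correct (`= s·x j`) with probability at least `1 - p`, the error event being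
independent of the query; the three checks are independent. -/
theorem rfs_three_checks_sound (n : ℕ) (hn : 1 ≤ n)
    (Ω : Type) [Fintype Ω] [DecidableEq Ω]
    (w : Ω → ℝ) (hw : ∀ ω, 0 ≤ w ω) (hw1 : ∑ ω, w ω = 1)
    (p : ℝ) (hp0 : 0 ≤ p) (hp1 : p ≤ 1)
    (g : (Fin n → ZMod 2) → ZMod 2)
    (s s' : Fin n → ZMod 2) (hg : g s' ≠ g s)
    (x : Fin 3 → Ω → (Fin n → ZMod 2)) (a : Fin 3 → Ω → ZMod 2)
    -- each query is uniform
    (huniform : ∀ (j : Fin 3) (v : Fin n → ZMod 2),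
      ∑ ω ∈ univ.filter (fun ω => x j ω = v), w ω = 1 / 2 ^ n)
    -- each subcall is correct with probability at least 1 - p
    (hcorrect : ∀ j : Fin 3,
      1 - p ≤ ∑ ω ∈ univ.filter (fun ω => a j ω = dotProduct s (x j ω)), w ω)
    -- within each check, the error event is independent of the query
    (hindep_err : ∀ (j : Fin 3) (v : Fin n → ZMod 2),
      ∑ ω ∈ univ.filter (fun ω => x j ω = v ∧ a j ω ≠ dotProduct s (x j ω)), w ω =
        (∑ ω ∈ univ.filter (fun ω => x j ω = v), w ω) *
        (∑ ω ∈ univ.filter (fun ω => a j ω ≠ dotProduct s (x j ω)), w ω))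
    -- the three checks are independent
    (hindep : ∑ ω ∈ univ.filter
        (fun ω => ∀ j : Fin 3, a j ω = dotProduct s' (x j ω)), w ω =
      ∏ j : Fin 3,
        ∑ ω ∈ univ.filter (fun ω => a j ω = dotProduct s' (x j ω)), w ω) :
    (∀ j : Fin 3,
      ∑ ω ∈ univ.filter (fun ω => a j ω = dotProduct s' (x j ω)), w ω ≤
        (1 / 2) * (1 + p)) ∧
    ∑ ω ∈ univ.filter (fun ω => ∀ j : Fin 3, a j ω = dotProduct s' (x j ω)), w ω ≤
      (1 / 8) * (1 + p) ^ 3 := by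
  classical
  have hss' : s' ≠ s := fun h => hg (by rw [h])
  obtain ⟨i, hi⟩ : ∃ i, s' i ≠ s i := by
    by_contra h
    push_neg at h
    exact hss' (funext h)
  set u : Fin n → ZMod 2 := Pi.single i 1 with hu
  have hdu : dotProduct s' u ≠ dotProduct s u := by
    simpa [hu, dotProduct_single] using hi
  set S : Finset (Fin n → ZMod 2) :=
    univ.filter (fun v => dotProduct s' v = dotProduct s v) with hS
  set T : Finset (Fin n → ZMod 2) :=
    univ.filter (fun v => ¬ dotProduct s' v = dotProduct s v) with hT
  have key : ∀ v, (dotProduct s' (v + u) = dotProduct s (v + u)) ↔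
      ¬ (dotProduct s' v = dotProduct s v) := by
    intro v
    rw [dotProduct_add, dotProduct_add]
    have h : ∀ c d : ZMod 2, c ≠ d → ∀ a b : ZMod 2, (a + c = b + d ↔ ¬ a = b) := by decide
    exact h _ _ hdu _ _
  have haddu : ∀ v : Fin n → ZMod 2, v + u + u = v := by
    intro v; funext k
    simp [CharTwo.add_self_eq_zero, add_assoc]
  have hST : S.card = T.card := by
    apply Finset.card_bij' (fun v _ => v + u) (fun v _ => v + u)
    · intro v hv
      simp only [hS, hT, mem_filter, mem_univ, true_and] at hv ⊢
      rw [key]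
      simp [hv]
    · intro v hv
      simp only [hS, hT, mem_filter, mem_univ, true_and] at hv ⊢
      exact (key v).mpr hv
    · intro v _; exact haddu v
    · intro v _; exact haddu v
  have hcardall : S.card + T.card = 2 ^ n := by
    have := Finset.card_filter_add_card_filter_not
      (s := (univ : Finset (Fin n → ZMod 2)))
      (p := fun v => dotProduct s' v = dotProduct s v)
    rw [hS, hT]
    simpa [Finset.card_univ] using this
  have hScard : S.card = 2 ^ (n - 1) := by
    have h2 : 2 ^ n = 2 * 2 ^ (n - 1) := by
      conv_lhs => rw [show n = (n - 1) + 1 by omega]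
      ring
    omega
  have hhalf : (S.card : ℝ) * (1 / 2 ^ n) = 1 / 2 := by
    rw [hScard]
    have h2 : (2 : ℝ) ^ n = 2 * 2 ^ (n - 1) := by
      conv_lhs => rw [show n = (n - 1) + 1 by omega]
      ring
    rw [h2]
    push_cast
    have : (2 : ℝ) ^ (n - 1) ≠ 0 := by positivity
    field_simp
  -- single check bound
  have hone : ∀ j : Fin 3,
      ∑ ω ∈ univ.filter (fun ω => a j ω = dotProduct s' (x j ω)), w ω ≤
        (1 / 2) * (1 + p) := by
    intro j
    set q : ℝ := ∑ ω ∈ univ.filter (fun ω => ¬ a j ω = dotProduct s (x j ω)), w ω with hq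
    have hqc : (∑ ω ∈ univ.filter (fun ω => a j ω = dotProduct s (x j ω)), w ω) + q = 1 := by
      rw [hq, Finset.sum_filter_add_sum_filter_not, hw1]
    have hqp : q ≤ p := by
      have := hcorrect j
      linarith
    have hq0 : 0 ≤ q := Finset.sum_nonneg fun ω _ => hw ω
    -- the "both correct and agreeing" event
    set Q1 : Finset Ω := univ.filter (fun ω =>
      dotProduct s' (x j ω) = dotProduct s (x j ω) ∧
        a j ω = dotProduct s (x j ω)) with hQ1
    set Q2 : Finset Ω := univ.filter (fun ω => ¬ a j ω = dotProduct s (x j ω)) with hQ2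
    have hsub : univ.filter (fun ω => a j ω = dotProduct s' (x j ω)) ⊆ Q1 ∪ Q2 := by
      intro ω hω
      simp only [mem_filter, mem_univ, true_and] at hω
      simp only [hQ1, hQ2, mem_union, mem_filter, mem_univ, true_and]
      by_cases hc : a j ω = dotProduct s (x j ω)
      · exact Or.inl ⟨by rw [← hω, hc], hc⟩
      · exact Or.inr hc
    have hbound : ∑ ω ∈ univ.filter (fun ω => a j ω = dotProduct s' (x j ω)), w ω ≤
        (∑ ω ∈ Q1, w ω) + q := by
      calc ∑ ω ∈ univ.filter (fun ω => a j ω = dotProduct s' (x j ω)), w ω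
          ≤ ∑ ω ∈ Q1 ∪ Q2, w ω :=
            Finset.sum_le_sum_of_subset_of_nonneg hsub (fun ω _ _ => hw ω)
        _ ≤ (∑ ω ∈ Q1, w ω) + ∑ ω ∈ Q2, w ω := by
            have := Finset.sum_union_inter (s₁ := Q1) (s₂ := Q2) (f := w)
            have h0 : 0 ≤ ∑ ω ∈ Q1 ∩ Q2, w ω := Finset.sum_nonneg fun ω _ => hw ω
            linarith
        _ = (∑ ω ∈ Q1, w ω) + q := by rw [hq, hQ2]
    -- compute the Q1 probability
    have hfib : ∑ ω ∈ Q1, w ω =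
        ∑ v ∈ S, ∑ ω ∈ univ.filter (fun ω => x j ω = v ∧
          a j ω = dotProduct s (x j ω)), w ω := by
      rw [← Finset.sum_fiberwise_of_maps_to (s := Q1) (t := S) (g := fun ω => x j ω)
        (fun ω hω => by
          simp only [hQ1, mem_filter, mem_univ, true_and] at hω
          simp only [hS, mem_filter, mem_univ, true_and]
          exact hω.1) w]
      apply Finset.sum_congr rfl
      intro v hv
      simp only [hS, mem_filter, mem_univ, true_and] at hv
      apply Finset.sum_congr _ (fun _ _ => rfl)
      rw [hQ1, Finset.filter_filter]
      apply Finset.filter_congr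
      intro ω _
      constructor
      · rintro ⟨⟨_, h2⟩, h3⟩; exact ⟨h3, h2⟩
      · rintro ⟨h3, h2⟩; exact ⟨⟨by rw [h3]; exact hv, h2⟩, h3⟩
    have hper : ∀ v ∈ S, ∑ ω ∈ univ.filter (fun ω => x j ω = v ∧
        a j ω = dotProduct s (x j ω)), w ω = (1 / 2 ^ n) * (1 - q) := by
      intro v _
      have hsplit := Finset.sum_filter_add_sum_filter_not
        (univ.filter (fun ω => x j ω = v))
        (fun ω => a j ω = dotProduct s (x j ω)) w
      rw [Finset.filter_filter, Finset.filter_filter] at hsplit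
      have herr := hindep_err j v
      rw [huniform j v] at herr
      have : (∑ ω ∈ univ.filter (fun ω => x j ω = v ∧
          ¬ a j ω = dotProduct s (x j ω)), w ω) = (1 / 2 ^ n) * q := by
        rw [← herr]
      rw [this, huniform j v] at hsplit
      linarith
    have hQ1val : ∑ ω ∈ Q1, w ω = (1 / 2) * (1 - q) := by
      rw [hfib, Finset.sum_congr rfl hper, Finset.sum_const, nsmul_eq_mul, ← mul_assoc, hhalf]
    rw [hQ1val] at hbound
    linarith
  refine ⟨hone, ?_⟩
  rw [hindep]
  have hnn : ∀ j : Fin 3, (0:ℝ) ≤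
      ∑ ω ∈ univ.filter (fun ω => a j ω = dotProduct s' (x j ω)), w ω :=
    fun j => Finset.sum_nonneg fun ω _ => hw ω
  calc ∏ j : Fin 3, ∑ ω ∈ univ.filter (fun ω => a j ω = dotProduct s' (x j ω)), w ω
      ≤ ∏ _j : Fin 3, ((1 / 2) * (1 + p)) :=
        Finset.prod_le_prod (fun j _ => hnn j) (fun j _ => hone j)
    _ = (1 / 8) * (1 + p) ^ 3 := by
        rw [Finset.prod_const]
        simp only [Finset.card_univ, Fintype.card_fin]
        ring
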